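/- Fix an integer s ≥ 2 and p ∈ (0,1). Let X_1, X_2, … be an i.i.d. sequence of random variables with the Log-Logistic(α;0,1) distribution, α > 0, and for each i ∈ ℕ let Q_{i,s}^{LL*} = (1/2)·log(X_{(is, i(s+1)−1)}/X_{(i, i(s+1)−1)})/log(s) be computed from the first n = i(s+1)−1 observations, and set (F̂_{i,s,LL}^←)^*(p) = (p/(1−p))^{Q_{i,s}^{LL*}}. Then (F̂_{i,s,LL}^←)^*(p) converges almost surely, as i → ∞, to the theoretical quantile F_X^←(p) = (p/(1−p))^{1/α}. -/

import Mathlib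

open MeasureTheory ProbabilityTheory Real Filter

/-- The `k`-th order statistic (1-based indexing) of the sample `x : Fin n → ℝ`. -/
noncomputable def orderStat (n : ℕ) (x : Fin n → ℝ) (k : ℕ) : ℝ :=
  (Multiset.sort ((List.ofFn x : List ℝ) : Multiset ℝ) (· ≤ ·)).getD (k - 1) 0

/-- The cumulative distribution function of the Log-Logistic(α; 0, 1) distribution. -/
noncomputable def logLogisticCDF (α : ℝ) (x : ℝ) : ℝ :=
  if 0 < x then 1 / (1 + x ^ (-α)) else 0

open Topology
lemma sorted_getD_le_iff {l : List ℝ} (hs : l.Pairwise (· ≤ ·)) {k : ℕ} (hk1 : 1 ≤ k)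
    (hkn : k ≤ l.length) (y : ℝ) :
    l.getD (k - 1) 0 ≤ y ↔ k ≤ l.countP (fun t => decide (t ≤ y)) := by
  have hklt : k - 1 < l.length := by omega
  rw [List.getD_eq_getElem _ _ hklt]
  constructor
  · intro h
    have htake : (l.take k).countP (fun t => decide (t ≤ y)) = k := by
      rw [List.countP_eq_length.2, List.length_take, min_eq_left hkn]
      intro a ha
      obtain ⟨i, hi, rfl⟩ := List.mem_iff_getElem.1 ha
      rw [List.getElem_take]
      have hik : i < k := by
        have := List.length_take (i := k) (l := l); omega
      have : l[i] ≤ l[k-1] := by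
        have := hs.rel_get_of_le (a := ⟨i, by omega⟩) (b := ⟨k-1, hklt⟩) (by simp; omega)
        simpa using this
      simp only [decide_eq_true_eq]
      exact this.trans h
    calc k = (l.take k).countP _ := htake.symm
    _ ≤ (l.take k).countP _ + (l.drop k).countP (fun t => decide (t ≤ y)) := Nat.le_add_right _ _
    _ = l.countP _ := by rw [← List.countP_append, List.take_append_drop]
  · intro h
    by_contra hy
    push_neg at hy
    have hdrop : (l.drop (k-1)).countP (fun t => decide (t ≤ y)) = 0 := by
      rw [List.countP_eq_zero]
      intro a ha
      obtain ⟨i, hi, rfl⟩ := List.mem_iff_getElem.1 ha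
      have hlen : k-1+i < l.length := by
        simp only [List.length_drop] at hi; omega
      have heq : (l.drop (k-1))[i] = l[k-1+i]'hlen := List.getElem_drop
      rw [heq]
      have : l[k-1] ≤ l[k-1+i] := by
        have := hs.rel_get_of_le (a := ⟨k-1, hklt⟩) (b := ⟨k-1+i, hlen⟩) (by simp)
        simpa using this
      simp only [decide_eq_true_eq, not_le]
      exact lt_of_lt_of_le hy this
    have : l.countP (fun t => decide (t ≤ y)) ≤ k - 1 := by
      calc l.countP _ = (l.take (k-1)).countP (fun t => decide (t ≤ y))
            + (l.drop (k-1)).countP _ := by rw [← List.countP_append, List.take_append_drop]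
      _ ≤ (k-1) + 0 := by
          refine Nat.add_le_add ?_ (le_of_eq hdrop)
          exact List.countP_le_length.trans (by simp)
      _ = k - 1 := by omega
    omega

lemma orderStat_le_iff {n : ℕ} (x : Fin n → ℝ) {k : ℕ} (hk1 : 1 ≤ k) (hkn : k ≤ n) (y : ℝ) :
    orderStat n x k ≤ y ↔ k ≤ (List.ofFn x).countP (fun t => decide (t ≤ y)) := by
  have hperm : (Multiset.sort ((List.ofFn x : List ℝ) : Multiset ℝ) (· ≤ ·)).Perm (List.ofFn x) :=
    Multiset.coe_eq_coe.1 (Multiset.sort_eq _ _)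
  rw [orderStat, ← hperm.countP_eq]
  exact sorted_getD_le_iff (Multiset.pairwise_sort _ _) hk1
    (by rw [hperm.length_eq, List.length_ofFn]; exact hkn) y

lemma countP_ofFn {n : ℕ} (f : Fin n → ℝ) (p : ℝ → Bool) :
    (List.ofFn f).countP p = ∑ j : Fin n, (if p (f j) then 1 else 0) := by
  induction n with
  | zero => simp
  | succ n ih =>
    rw [List.ofFn_succ, List.countP_cons, Fin.sum_univ_succ, ih (fun j => f j.succ)]
    by_cases h : p (f 0) <;> simp [h] <;> omega

lemma cdf_strictMono {α : ℝ} (hα : 0 < α) {a b : ℝ} (ha : 0 < a) (hab : a < b) :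
    logLogisticCDF α a < logLogisticCDF α b := by
  have hb : 0 < b := ha.trans hab
  rw [logLogisticCDF, logLogisticCDF, if_pos ha, if_pos hb]
  have h1 : b ^ (-α) < a ^ (-α) := Real.rpow_lt_rpow_of_neg ha hab (by linarith)
  have h2 : (0:ℝ) < b ^ (-α) := Real.rpow_pos_of_pos hb _
  rw [div_lt_div_iff₀ (by linarith) (by linarith)]
  linarith

lemma cdf_xi {α : ℝ} (hα : 0 < α) {q : ℝ} (hq0 : 0 < q) (hq1 : q < 1) :
    logLogisticCDF α ((q / (1 - q)) ^ (1/α)) = q := by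
  have hbase : 0 < q / (1 - q) := div_pos hq0 (by linarith)
  have hxi : 0 < (q / (1 - q)) ^ (1/α) := Real.rpow_pos_of_pos hbase _
  rw [logLogisticCDF, if_pos hxi, ← Real.rpow_mul hbase.le,
    show (1/α) * (-α) = -1 by field_simp, Real.rpow_neg_one, inv_div]
  field_simp
  ring

lemma cdf_nonneg (α y : ℝ) : 0 ≤ logLogisticCDF α y := by
  rw [logLogisticCDF]
  split
  · positivity
  · exact le_refl _

lemma cdf_lt_iff {α : ℝ} (hα : 0 < α) {q : ℝ} (hq0 : 0 < q) (hq1 : q < 1) (y : ℝ) :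
    logLogisticCDF α y < q ↔ y < (q / (1 - q)) ^ (1/α) := by
  have hbase : 0 < q / (1 - q) := div_pos hq0 (by linarith)
  have hxi : 0 < (q / (1 - q)) ^ (1/α) := Real.rpow_pos_of_pos hbase _
  constructor
  · intro h
    by_contra hy
    push_neg at hy
    rcases eq_or_lt_of_le hy with h'|h'
    · rw [← h', cdf_xi hα hq0 hq1] at h; exact lt_irrefl _ h
    · have := cdf_strictMono hα hxi h'
      rw [cdf_xi hα hq0 hq1] at this
      linarith
  · intro h
    rcases le_or_gt y 0 with h0|h0
    · rw [logLogisticCDF, if_neg (not_lt.2 h0)]; exact hq0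
    · have := cdf_strictMono hα h0 h
      rwa [cdf_xi hα hq0 hq1] at this

lemma cdf_gt_iff {α : ℝ} (hα : 0 < α) {q : ℝ} (hq0 : 0 < q) (hq1 : q < 1) (y : ℝ) :
    q < logLogisticCDF α y ↔ (q / (1 - q)) ^ (1/α) < y := by
  have hbase : 0 < q / (1 - q) := div_pos hq0 (by linarith)
  have hxi : 0 < (q / (1 - q)) ^ (1/α) := Real.rpow_pos_of_pos hbase _
  constructor
  · intro h
    by_contra hy
    push_neg at hy
    rcases eq_or_lt_of_le hy with h'|h'
    · rw [h', cdf_xi hα hq0 hq1] at h; exact lt_irrefl _ h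
    · rcases le_or_gt y 0 with h0|h0
      · rw [logLogisticCDF, if_neg (not_lt.2 h0)] at h; linarith
      · have := cdf_strictMono hα h0 h'
        rw [cdf_xi hα hq0 hq1] at this
        linarith
  · intro h
    have := cdf_strictMono hα hxi h
    rwa [cdf_xi hα hq0 hq1] at this

lemma rank_ratio (s c : ℕ) (hs : 1 ≤ s) :
    Tendsto (fun i : ℕ => ((i*c : ℕ) : ℝ) / (((i*(s+1)-1 : ℕ)) : ℝ)) atTop
      (𝓝 ((c : ℝ)/((s : ℝ)+1))) := by
  have hs1 : (0:ℝ) < (s:ℝ)+1 := by positivity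
  have h2 : Tendsto (fun i : ℕ => ((s:ℝ)+1) - 1/i) atTop (𝓝 (((s:ℝ)+1) - 0)) :=
    tendsto_const_nhds.sub tendsto_one_div_atTop_nhds_zero_nat
  rw [sub_zero] at h2
  have h3 : Tendsto (fun i : ℕ => (c:ℝ) / (((s:ℝ)+1) - 1/i)) atTop (𝓝 ((c:ℝ)/((s:ℝ)+1))) :=
    tendsto_const_nhds.div h2 (ne_of_gt hs1)
  refine h3.congr' ?_
  filter_upwards [eventually_ge_atTop 1] with i hi
  have hipos : (0:ℝ) < i := by exact_mod_cast Nat.lt_of_lt_of_le Nat.zero_lt_one hi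
  have hsr : (1:ℝ) ≤ (s:ℝ) := by exact_mod_cast hs
  have hir : (1:ℝ) ≤ (i:ℝ) := by exact_mod_cast hi
  have hle : 1 ≤ i*(s+1) := by
    calc 1 = 1*1 := by ring
    _ ≤ i*(s+1) := Nat.mul_le_mul hi (by omega)
  have hcast : ((i*(s+1)-1 : ℕ) : ℝ) = (i:ℝ)*((s:ℝ)+1) - 1 := by
    push_cast [hle]
    ring
  have hden : (0:ℝ) < (i:ℝ)*((s:ℝ)+1) - 1 := by nlinarith
  have hden2 : (0:ℝ) < ((s:ℝ)+1) - 1/i := by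
    have : 1/(i:ℝ) ≤ 1 := by
      rw [div_le_one hipos]; exact hir
    linarith
  rw [hcast]
  push_cast
  rw [div_eq_div_iff hden2.ne' hden.ne']
  field_simp

lemma empirical {Ω : Type*} [MeasurableSpace Ω] {μ : Measure Ω} [IsProbabilityMeasure μ]
    {α : ℝ} {X : ℕ → Ω → ℝ} (hmeas : ∀ k, Measurable (X k))
    (hindep : iIndepFun X μ)
    (hdist : ∀ k x, μ {ω | X k ω ≤ x} = ENNReal.ofReal (logLogisticCDF α x)) (y : ℝ) :
    ∀ᵐ ω ∂μ, Tendsto (fun n : ℕ =>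
      (((List.ofFn (fun j : Fin n => X j ω)).countP (fun t => decide (t ≤ y)) : ℝ)) / n)
      atTop (𝓝 (logLogisticCDF α y)) := by
  classical
  set g : ℝ → ℝ := (Set.Iic y).indicator (fun _ => (1:ℝ)) with hg_def
  have hg : Measurable g := measurable_const.indicator measurableSet_Iic
  set Y : ℕ → Ω → ℝ := fun k => g ∘ X k with hY_def
  have hYeq : ∀ k, Y k = (X k ⁻¹' Set.Iic y).indicator (fun _ => (1:ℝ)) := by
    intro k
    funext ω
    simp [hY_def, hg_def, Set.indicator_apply, Set.mem_preimage]
  have hint : Integrable (Y 0) μ := by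
    rw [hYeq 0]
    exact (integrable_const (1:ℝ)).indicator ((hmeas 0) measurableSet_Iic)
  have hpind : Pairwise (Function.onFun (IndepFun · · μ) Y) := fun i j hij =>
    (hindep.indepFun hij).comp hg hg
  have hidX : ∀ i, IdentDistrib (X i) (X 0) μ μ := by
    intro i
    refine ⟨(hmeas i).aemeasurable, (hmeas 0).aemeasurable, ?_⟩
    have h1 : IsProbabilityMeasure (μ.map (X i)) := Measure.isProbabilityMeasure_map (hmeas i).aemeasurable
    refine MeasureTheory.Measure.ext_of_Iic _ _ (fun a => ?_)
    rw [Measure.map_apply (hmeas i) measurableSet_Iic,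
      Measure.map_apply (hmeas 0) measurableSet_Iic]
    have hpre : ∀ k, X k ⁻¹' Set.Iic a = {ω | X k ω ≤ a} := fun k => rfl
    rw [hpre i, hpre 0, hdist i a, hdist 0 a]
  have hident : ∀ i, IdentDistrib (Y i) (Y 0) μ μ := fun i => (hidX i).comp hg
  have hmean : μ[Y 0] = logLogisticCDF α y := by
    rw [hYeq 0, integral_indicator_const (1:ℝ) ((hmeas 0) measurableSet_Iic)]
    have hpre : X 0 ⁻¹' Set.Iic y = {ω | X 0 ω ≤ y} := rfl
    rw [hpre, measureReal_def, hdist 0 y, smul_eq_mul, mul_one, ENNReal.toReal_ofReal (cdf_nonneg α y)]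
  have hsl := strong_law_ae_real Y hint hpind hident
  rw [hmean] at hsl
  filter_upwards [hsl] with ω hω
  refine hω.congr (fun n => ?_)
  congr 1
  rw [countP_ofFn]
  push_cast
  rw [← Fin.sum_univ_eq_sum_range (fun i => Y i ω) n]
  refine Finset.sum_congr rfl (fun j _ => ?_)
  by_cases h : X j ω ≤ y <;> simp [hY_def, hg_def, Set.indicator_apply, h]

lemma tendsto_nseq (s : ℕ) (hs : 2 ≤ s) : Tendsto (fun i : ℕ => i*(s+1)-1) atTop atTop := by
  refine tendsto_atTop_mono (fun i => ?_) (tendsto_sub_atTop_nat 1)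
  have : i ≤ i*(s+1) := Nat.le_mul_of_pos_right i (by omega)
  omega

lemma eventually_gt {Ω : Type*} [MeasurableSpace Ω] {μ : Measure Ω} [IsProbabilityMeasure μ]
    {α : ℝ} {X : ℕ → Ω → ℝ} (hmeas : ∀ k, Measurable (X k))
    (hindep : iIndepFun X μ)
    (hdist : ∀ k x, μ {ω | X k ω ≤ x} = ENNReal.ofReal (logLogisticCDF α x))
    (s c : ℕ) (hs : 2 ≤ s) (hc1 : 1 ≤ c) (hcs : c ≤ s) {y : ℝ}
    (hy : logLogisticCDF α y < (c:ℝ)/((s:ℝ)+1)) :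
    ∀ᵐ ω ∂μ, ∀ᶠ i in atTop, y < orderStat (i*(s+1)-1) (fun j => X j ω) (i*c) := by
  filter_upwards [empirical hmeas hindep hdist y] with ω hω
  have hcomp := hω.comp (tendsto_nseq s hs)
  have hratio := rank_ratio s c (by omega)
  have hev := hcomp.eventually_lt hratio hy
  filter_upwards [hev, eventually_ge_atTop 1] with i hi hi1
  simp only [Function.comp_apply] at hi
  have hkn : i*c ≤ i*(s+1)-1 := by
    have h1 : i*c ≤ i*s := Nat.mul_le_mul_left i hcs
    have h2 : i*(s+1) = i*s + i := by ring
    omega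
  have hk1 : 1 ≤ i*c := by
    calc 1 = 1*1 := (one_mul 1).symm
    _ ≤ i*c := Nat.mul_le_mul hi1 hc1
  have hnpos : (0:ℝ) < ((i*(s+1)-1 : ℕ) : ℝ) := by
    exact_mod_cast Nat.lt_of_lt_of_le Nat.zero_lt_one (hk1.trans hkn)
  have hcnt : ((List.ofFn fun j : Fin (i*(s+1)-1) => X j ω).countP
      (fun t => decide (t ≤ y))) < i*c := by
    have h := mul_lt_mul_of_pos_right hi hnpos
    rw [div_mul_cancel₀ _ hnpos.ne', div_mul_cancel₀ _ hnpos.ne'] at h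
    exact_mod_cast h
  by_contra hle
  push_neg at hle
  have := (orderStat_le_iff _ hk1 hkn y).1 hle
  omega

lemma eventually_le {Ω : Type*} [MeasurableSpace Ω] {μ : Measure Ω} [IsProbabilityMeasure μ]
    {α : ℝ} {X : ℕ → Ω → ℝ} (hmeas : ∀ k, Measurable (X k))
    (hindep : iIndepFun X μ)
    (hdist : ∀ k x, μ {ω | X k ω ≤ x} = ENNReal.ofReal (logLogisticCDF α x))
    (s c : ℕ) (hs : 2 ≤ s) (hc1 : 1 ≤ c) (hcs : c ≤ s) {y : ℝ}
    (hy : (c:ℝ)/((s:ℝ)+1) < logLogisticCDF α y) :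
    ∀ᵐ ω ∂μ, ∀ᶠ i in atTop, orderStat (i*(s+1)-1) (fun j => X j ω) (i*c) ≤ y := by
  filter_upwards [empirical hmeas hindep hdist y] with ω hω
  have hcomp := hω.comp (tendsto_nseq s hs)
  have hratio := rank_ratio s c (by omega)
  have hev := hratio.eventually_lt hcomp hy
  filter_upwards [hev, eventually_ge_atTop 1] with i hi hi1
  simp only [Function.comp_apply] at hi
  have hkn : i*c ≤ i*(s+1)-1 := by
    have h1 : i*c ≤ i*s := Nat.mul_le_mul_left i hcs
    have h2 : i*(s+1) = i*s + i := by ring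
    omega
  have hk1 : 1 ≤ i*c := by
    calc 1 = 1*1 := (one_mul 1).symm
    _ ≤ i*c := Nat.mul_le_mul hi1 hc1
  have hnpos : (0:ℝ) < ((i*(s+1)-1 : ℕ) : ℝ) := by
    exact_mod_cast Nat.lt_of_lt_of_le Nat.zero_lt_one (hk1.trans hkn)
  have hcnt : i*c < ((List.ofFn fun j : Fin (i*(s+1)-1) => X j ω).countP
      (fun t => decide (t ≤ y))) := by
    have h := mul_lt_mul_of_pos_right hi hnpos
    rw [div_mul_cancel₀ _ hnpos.ne', div_mul_cancel₀ _ hnpos.ne'] at h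
    exact_mod_cast h
  exact (orderStat_le_iff _ hk1 hkn y).2 hcnt.le

lemma tendsto_of_bounds {f : ℕ → ℝ} {ξ : ℝ}
    (h : ∀ m : ℕ, (∀ᶠ i in atTop, ξ - 1/((m:ℝ)+1) < f i) ∧
      (∀ᶠ i in atTop, f i ≤ ξ + 1/((m:ℝ)+1))) :
    Tendsto f atTop (𝓝 ξ) := by
  refine tendsto_order.2 ⟨fun a ha => ?_, fun a ha => ?_⟩
  · obtain ⟨m, hm⟩ := exists_nat_one_div_lt (sub_pos.2 ha)
    filter_upwards [(h m).1] with i hi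
    have hm' : 1/((m:ℝ)+1) < ξ - a := hm
    linarith
  · obtain ⟨m, hm⟩ := exists_nat_one_div_lt (sub_pos.2 ha)
    filter_upwards [(h m).2] with i hi
    have hm' : 1/((m:ℝ)+1) < a - ξ := hm
    linarith

/-- For fixed `s ≥ 2`, `p ∈ (0,1)` and an i.i.d. sequence from the
Log-Logistic(α;0,1) distribution, the quantile estimators
`(p/(1-p))^{Q_{i,s}^{LL*}}`, computed from the first `n = i(s+1)-1`
observations, converge almost surely to the theoretical quantile
`(p/(1-p))^{1/α}` as `i → ∞`. -/
theorem stmt7 {Ω : Type*} [MeasurableSpace Ω] (μ : Measure Ω) [IsProbabilityMeasure μ]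
    (s : ℕ) (hs : 2 ≤ s) (p : ℝ) (hp : p ∈ Set.Ioo (0 : ℝ) 1)
    (α : ℝ) (hα : 0 < α)
    (X : ℕ → Ω → ℝ) (hmeas : ∀ k, Measurable (X k))
    (hindep : iIndepFun X μ)
    (hdist : ∀ k x, μ {ω | X k ω ≤ x} = ENNReal.ofReal (logLogisticCDF α x)) :
    ∀ᵐ ω ∂μ, Tendsto (fun i : ℕ =>
        (p / (1 - p)) ^ ((1 / 2) * Real.log
          (orderStat (i * (s + 1) - 1) (fun j => X j ω) (i * s) /
            orderStat (i * (s + 1) - 1) (fun j => X j ω) i) / Real.log s))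
      atTop (nhds ((p / (1 - p)) ^ (1 / α))) := by
  obtain ⟨hp0, hp1⟩ := hp
  have hsr : (2:ℝ) ≤ (s:ℝ) := by exact_mod_cast hs
  have hs1 : (0:ℝ) < (s:ℝ)+1 := by linarith
  have hspos : (0:ℝ) < (s:ℝ) := by linarith
  set q1 : ℝ := (s:ℝ)/((s:ℝ)+1) with hq1def
  set q2 : ℝ := (1:ℝ)/((s:ℝ)+1) with hq2def
  have hq1a : (0:ℝ) < q1 := by rw [hq1def]; positivity
  have hq1b : q1 < 1 := by rw [hq1def, div_lt_one hs1]; linarith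
  have hq2a : (0:ℝ) < q2 := by rw [hq2def]; positivity
  have hq2b : q2 < 1 := by rw [hq2def, div_lt_one hs1]; linarith
  set ξ1 : ℝ := (q1/(1-q1)) ^ (1/α) with hξ1def
  set ξ2 : ℝ := (q2/(1-q2)) ^ (1/α) with hξ2def
  have hb1 : q1/(1-q1) = (s:ℝ) := by
    rw [hq1def]
    field_simp
    ring
  have hb2 : q2/(1-q2) = ((s:ℝ))⁻¹ := by
    rw [hq2def]
    field_simp
    rw [add_sub_cancel_right, div_self hspos.ne']
  have hξ1eq : ξ1 = (s:ℝ) ^ (1/α) := by rw [hξ1def, hb1]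
  have hξ2eq : ξ2 = ((s:ℝ))⁻¹ ^ (1/α) := by rw [hξ2def, hb2]
  have hξ1pos : 0 < ξ1 := by rw [hξ1eq]; exact Real.rpow_pos_of_pos hspos _
  have hξ2pos : 0 < ξ2 := by
    rw [hξ2eq]; exact Real.rpow_pos_of_pos (by positivity) _
  -- the four families of almost-sure eventual bounds
  have hgt1 : ∀ᵐ ω ∂μ, ∀ m : ℕ, ∀ᶠ i in atTop,
      ξ1 - 1/((m:ℝ)+1) < orderStat (i*(s+1)-1) (fun j => X j ω) (i*s) := by
    rw [ae_all_iff]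
    intro m
    refine eventually_gt hmeas hindep hdist s s hs (by omega) le_rfl ?_
    refine (cdf_lt_iff hα hq1a hq1b _).2 ?_
    have : (0:ℝ) < 1/((m:ℝ)+1) := by positivity
    rw [← hξ1def]
    linarith
  have hle1 : ∀ᵐ ω ∂μ, ∀ m : ℕ, ∀ᶠ i in atTop,
      orderStat (i*(s+1)-1) (fun j => X j ω) (i*s) ≤ ξ1 + 1/((m:ℝ)+1) := by
    rw [ae_all_iff]
    intro m
    refine eventually_le hmeas hindep hdist s s hs (by omega) le_rfl ?_
    refine (cdf_gt_iff hα hq1a hq1b _).2 ?_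
    have : (0:ℝ) < 1/((m:ℝ)+1) := by positivity
    rw [← hξ1def]
    linarith
  have hgt2 : ∀ᵐ ω ∂μ, ∀ m : ℕ, ∀ᶠ i in atTop,
      ξ2 - 1/((m:ℝ)+1) < orderStat (i*(s+1)-1) (fun j => X j ω) (i*1) := by
    rw [ae_all_iff]
    intro m
    refine eventually_gt hmeas hindep hdist s 1 hs le_rfl (by omega) ?_
    rw [Nat.cast_one, ← hq2def]
    refine (cdf_lt_iff hα hq2a hq2b _).2 ?_
    have : (0:ℝ) < 1/((m:ℝ)+1) := by positivity
    rw [← hξ2def]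
    linarith
  have hle2 : ∀ᵐ ω ∂μ, ∀ m : ℕ, ∀ᶠ i in atTop,
      orderStat (i*(s+1)-1) (fun j => X j ω) (i*1) ≤ ξ2 + 1/((m:ℝ)+1) := by
    rw [ae_all_iff]
    intro m
    refine eventually_le hmeas hindep hdist s 1 hs le_rfl (by omega) ?_
    rw [Nat.cast_one, ← hq2def]
    refine (cdf_gt_iff hα hq2a hq2b _).2 ?_
    have : (0:ℝ) < 1/((m:ℝ)+1) := by positivity
    rw [← hξ2def]
    linarith
  filter_upwards [hgt1, hle1, hgt2, hle2] with ω h1 h2 h3 h4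
  have hA : Tendsto (fun i : ℕ => orderStat (i*(s+1)-1) (fun j => X j ω) (i*s))
      atTop (𝓝 ξ1) := tendsto_of_bounds (fun m => ⟨h1 m, h2 m⟩)
  have hB : Tendsto (fun i : ℕ => orderStat (i*(s+1)-1) (fun j => X j ω) i)
      atTop (𝓝 ξ2) := by
    have := tendsto_of_bounds (fun m => ⟨h3 m, h4 m⟩)
    simpa [mul_one] using this
  have hratio : Tendsto (fun i : ℕ =>
      orderStat (i*(s+1)-1) (fun j => X j ω) (i*s) /
        orderStat (i*(s+1)-1) (fun j => X j ω) i) atTop (𝓝 (ξ1/ξ2)) :=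
    hA.div hB hξ2pos.ne'
  have hval : ξ1/ξ2 = (s:ℝ) ^ (2/α) := by
    rw [hξ1eq, hξ2eq, Real.inv_rpow hspos.le, div_eq_mul_inv, inv_inv, ← Real.rpow_add hspos]
    congr 1
    ring
  rw [hval] at hratio
  have hrpos : (0:ℝ) < (s:ℝ)^(2/α) := Real.rpow_pos_of_pos hspos _
  have hlog := hratio.log hrpos.ne'
  rw [Real.log_rpow hspos] at hlog
  have hlogs : 0 < Real.log s := Real.log_pos (by linarith)
  have hexp : Tendsto (fun i : ℕ => (1/2) * Real.log
      (orderStat (i*(s+1)-1) (fun j => X j ω) (i*s) /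
        orderStat (i*(s+1)-1) (fun j => X j ω) i) / Real.log s) atTop (𝓝 (1/α)) := by
    have h := (hlog.const_mul (1/2 : ℝ)).div_const (Real.log s)
    have heq : (1/2 : ℝ) * (2/α * Real.log s) / Real.log s = 1/α := by
      field_simp
    rwa [heq] at h
  have hcne : p/(1-p) ≠ 0 := (div_pos hp0 (by linarith)).ne'
  exact Filter.Tendsto.rpow tendsto_const_nhds hexp (Or.inl hcne)
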